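/- Let B_1, …, B_n and C be subspaces of a finite-dimensional vector space W and let α ⊆ {1,…,n}. Then there exists a subspace A of W such that dim A = dim⟨C, B_j (j∈α)⟩ − dim⟨B_j : j∈α⟩, and for any complementary subspace A* of A (with associated projection T_A onto A* along A), T_A(C) ⊆ ⟨T_A(B_j) : j∈α⟩, i.e., dim⟨T_A(C), T_A(B_j) (j∈α)⟩ − dim⟨T_A(B_j) : j∈α⟩ = 0. -/

import Mathlib

open Module

lemma mapFinsetSupAux {K W : Type} [Field K] [AddCommGroup W] [Module K W]
    (π : W →ₗ[K] W) {n : ℕ} (B : Fin n → Submodule K W) (α : Finset (Fin n)) :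
    Submodule.map π (α.sup B) = α.sup (fun j => Submodule.map π (B j)) := by
  classical
  induction α using Finset.induction with
  | empty => simp
  | insert _ _ _ ih => simp [Finset.sup_insert, Submodule.map_sup, ih]

/-- for subspaces `B_1, …, B_n, C` of a finite-dimensional space `W` and
`α ⊆ {1,…,n}` there is a subspace `A` with `dim A = dim⟨C, B_j (j∈α)⟩ − dim⟨B_j : j∈α⟩`
such that for any complement `A*` of `A` with projection `π` onto `A*` along `A`,
`T_A(C) ⊆ ⟨T_A(B_j) : j∈α⟩`, i.e.
`dim⟨T_A(C), T_A(B_j) (j∈α)⟩ − dim⟨T_A(B_j) : j∈α⟩ = 0`. -/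
theorem exists_subspace_projection_containment {K W : Type} [Field K] [AddCommGroup W]
    [Module K W] [FiniteDimensional K W]
    (n : ℕ) (B : Fin n → Submodule K W) (C : Submodule K W) (α : Finset (Fin n)) :
    ∃ A : Submodule K W,
      ((finrank K ↥A : ℝ) = (finrank K ↥(C ⊔ α.sup B) : ℝ) - (finrank K ↥(α.sup B) : ℝ))
      ∧ ∀ (Astar : Submodule K W) (π : W →ₗ[K] W),
          IsCompl A Astar → (∀ u : W, π u ∈ Astar ∧ u - π u ∈ A) →
          Submodule.map π C ≤ α.sup (fun j => Submodule.map π (B j))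
          ∧ (finrank K ↥(Submodule.map π C ⊔ α.sup fun j => Submodule.map π (B j)) : ℝ)
              - (finrank K ↥(α.sup fun j => Submodule.map π (B j)) : ℝ) = 0 := by
  set Bα := α.sup B with hBα
  set V := C ⊔ Bα with hV
  have hBV : Bα ≤ V := le_sup_right
  obtain ⟨q, hq⟩ := (Bα.comap V.subtype).exists_isCompl
  refine ⟨q.map V.subtype, ?_, ?_⟩
  -- key structural facts
  · have hinf : q.map V.subtype ⊓ Bα = ⊥ := by
      have : q.map V.subtype ⊓ (Bα.comap V.subtype).map V.subtype = ⊥ := by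
        rw [← Submodule.map_inf _ (Submodule.injective_subtype V), inf_comm,
          hq.inf_eq_bot, Submodule.map_bot]
      rwa [Submodule.map_comap_subtype, inf_of_le_right hBV] at this
    have hsup : q.map V.subtype ⊔ Bα = V := by
      have : q.map V.subtype ⊔ (Bα.comap V.subtype).map V.subtype = V := by
        rw [← Submodule.map_sup, sup_comm, hq.sup_eq_top, Submodule.map_top,
          Submodule.range_subtype]
      rwa [Submodule.map_comap_subtype, inf_of_le_right hBV] at this
    have hdim := Submodule.finrank_sup_add_finrank_inf_eq (q.map V.subtype) Bα
    rw [hsup, hinf, finrank_bot, add_zero] at hdim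
    have hdim' := congrArg (Nat.cast : ℕ → ℝ) hdim
    push_cast at hdim'
    linarith
  · intro Astar π hcompl hproj
    have hA0 : ∀ a ∈ q.map V.subtype, π a = 0 := by
      intro a ha
      have h1 : π a ∈ Astar := (hproj a).1
      have h2 : π a ∈ q.map V.subtype := by
        have := (hproj a).2
        have : a - (a - π a) ∈ q.map V.subtype := Submodule.sub_mem _ ha this
        simpa using this
      have := hcompl.inf_eq_bot ▸ (Submodule.mem_inf.2 ⟨h2, h1⟩)
      simpa using this
    have hsup : q.map V.subtype ⊔ Bα = V := by
      have : q.map V.subtype ⊔ (Bα.comap V.subtype).map V.subtype = V := by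
        rw [← Submodule.map_sup, sup_comm, hq.sup_eq_top, Submodule.map_top,
          Submodule.range_subtype]
      rwa [Submodule.map_comap_subtype, inf_of_le_right hBV] at this
    have hle : Submodule.map π C ≤ α.sup (fun j => Submodule.map π (B j)) := by
      rintro _ ⟨c, hc, rfl⟩
      have hcV : c ∈ V := le_sup_left (a := C) (b := Bα) hc
      rw [← hsup] at hcV
      obtain ⟨a, ha, b, hb, rfl⟩ := Submodule.mem_sup.mp hcV
      have : π (a + b) = π b := by
        rw [map_add, hA0 a ha, zero_add]
      rw [this, ← mapFinsetSupAux π B α]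
      exact ⟨b, hb, rfl⟩
    refine ⟨hle, ?_⟩
    rw [sup_of_le_right hle]
    ring
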